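/- For any string w with at most two runs of the form α^l β^r (α ≠ β characters, l, r ≥ 0) and any string u of length k, the Levenshtein distance ℓ(u, w) can be written as f₁ + min f₂, where f₁ = max(k − l − r, 0) and the minimum of f₂(i) = max(l − N_α(u_(i)), 0) + max(r − N_β(u^(k−i)), 0) is taken over max(0, min(l, k−r)) ≤ i ≤ min(k, max(l, k−r)). -/

import Mathlib

/-- The cost functions for the Levenshtein distance (removed from Mathlib; restored verbatim
in meaning from `Mathlib/Data/List/EditDistance/Defs.lean`). -/
structure Levenshtein.Cost (α β δ : Type*) where
  /-- Cost to delete an element from a list. -/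
  delete : α → δ
  /-- Cost to insert an element into a list. -/
  insert : β → δ
  /-- Cost to substitute one element for another in a list. -/
  substitute : α → β → δ

/-- The default cost structure, for which all operations cost `1`, except substituting an
element by itself. -/
def Levenshtein.defaultCost {α : Type*} [DecidableEq α] : Levenshtein.Cost α α ℕ where
  delete _ := 1
  insert _ := 1
  substitute a b := if a = b then 0 else 1

/-- (Implementation detail of the old Mathlib definition.) -/
def Levenshtein.impl {α β δ : Type*} [AddZeroClass δ] [Min δ]
    (C : Levenshtein.Cost α β δ) (xs : List α) (y : β) (d : {r : List δ // 0 < r.length}) :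
    {r : List δ // 0 < r.length} :=
  let ⟨ds, w⟩ := d
  xs.zip (ds.zip ds.tail) |>.foldr
    (init := ⟨[C.insert y + ds.getLast (List.length_pos_iff.mp w)], by simp⟩)
    (fun ⟨x, d₀, d₁⟩ ⟨r, w⟩ =>
      ⟨min (C.delete x + r[0]) (min (C.insert y + d₀) (C.substitute x y + d₁)) :: r, by simp⟩)

/-- `suffixLevenshtein C xs ys` computes the Levenshtein distance from each suffix of `xs`
to `ys`. -/
def suffixLevenshtein {α β δ : Type*} [AddZeroClass δ] [Min δ]
    (C : Levenshtein.Cost α β δ) (xs : List α) (ys : List β) :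
    {r : List δ // 0 < r.length} :=
  ys.foldr
    (Levenshtein.impl C xs)
    (xs.foldr (init := ⟨[0], by simp⟩) (fun a ⟨ds, w⟩ => ⟨(C.delete a + ds[0]) :: ds, by simp⟩))

/-- The Levenshtein distance from `xs` to `ys` with cost structure `C`. -/
def levenshtein {α β δ : Type*} [AddZeroClass δ] [Min δ]
    (C : Levenshtein.Cost α β δ) (xs : List α) (ys : List β) : δ :=
  let ⟨r, w⟩ := suffixLevenshtein C xs ys
  r[0]


namespace Levenshtein

variable {α β δ : Type*} [AddZeroClass δ] [Min δ] (C : Levenshtein.Cost α β δ)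

@[simp] theorem defaultCost_delete {γ : Type*} [DecidableEq γ] (x : γ) :
    (defaultCost : Cost γ γ ℕ).delete x = 1 := rfl

@[simp] theorem defaultCost_insert {γ : Type*} [DecidableEq γ] (x : γ) :
    (defaultCost : Cost γ γ ℕ).insert x = 1 := rfl

@[simp] theorem defaultCost_substitute {γ : Type*} [DecidableEq γ] (x y : γ) :
    (defaultCost : Cost γ γ ℕ).substitute x y = if x = y then 0 else 1 := rfl

theorem impl_cons_val (x : α) (xs : List α) (y : β) (d₁ d₂ : δ) (ds : List δ) (w) :
    (impl C (x :: xs) y ⟨d₁ :: d₂ :: ds, w⟩).1 =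
      min (C.delete x + (impl C xs y ⟨d₂ :: ds, by simp⟩).1[0]'(impl C xs y ⟨d₂ :: ds, by simp⟩).2)
        (min (C.insert y + d₁) (C.substitute x y + d₂)) :: (impl C xs y ⟨d₂ :: ds, by simp⟩).1 :=
  rfl

theorem impl_nil_val (y : β) (d : δ) (w) :
    (impl C [] y ⟨[d], w⟩).1 = [C.insert y + d] := rfl

theorem suffixLev_cons_nil_val (x : α) (xs : List α) :
    (suffixLevenshtein C (x :: xs) []).1 =
      (C.delete x + (suffixLevenshtein C xs []).1[0]'(suffixLevenshtein C xs []).2) ::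
        (suffixLevenshtein C xs []).1 := rfl

theorem suffixLev_cons₂ (xs : List α) (y : β) (ys : List β) :
    suffixLevenshtein C xs (y :: ys) = impl C xs y (suffixLevenshtein C xs ys) := rfl

theorem impl_length' (xs : List α) (y : β) (d : {r : List δ // 0 < r.length})
    (w : d.1.length = xs.length + 1) : (impl C xs y d).1.length = xs.length + 1 := by
  induction xs generalizing d with
  | nil =>
    obtain ⟨d, hd⟩ := d
    match d, hd, w with
    | [d₁], _, _ => rfl
  | cons x xs ih =>
    obtain ⟨d, hd⟩ := d
    match d, hd, w with
    | d₁ :: d₂ :: ds, _, w =>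
      rw [impl_cons_val, List.length_cons, ih ⟨d₂ :: ds, by simp⟩ (by simpa using w)]
      simp

theorem suffixLev_length (xs : List α) (ys : List β) :
    (suffixLevenshtein C xs ys).1.length = xs.length + 1 := by
  induction ys with
  | nil =>
    induction xs with
    | nil => rfl
    | cons x xs ih => rw [suffixLev_cons_nil_val, List.length_cons, ih]; simp
  | cons y ys ih => rw [suffixLev_cons₂, impl_length' C xs y _ ih]

theorem suffixLev_cons₁ (x : α) (xs : List α) (ys : List β) :
    ∃ t, (suffixLevenshtein C (x :: xs) ys).1 = t :: (suffixLevenshtein C xs ys).1 := by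
  induction ys with
  | nil => exact ⟨_, suffixLev_cons_nil_val C x xs⟩
  | cons y ys ih =>
    obtain ⟨t, ht⟩ := ih
    have hl := suffixLev_length C xs ys
    obtain ⟨d₂, ds, hS⟩ : ∃ d₂ ds, (suffixLevenshtein C xs ys).1 = d₂ :: ds := by
      cases hc : (suffixLevenshtein C xs ys).1 with
      | nil => simp [hc] at hl
      | cons d₂ ds => exact ⟨d₂, ds, rfl⟩
    have e1 : suffixLevenshtein C xs ys = ⟨d₂ :: ds, by simp⟩ := Subtype.ext hS
    have e : suffixLevenshtein C (x :: xs) ys = ⟨t :: d₂ :: ds, by simp⟩ :=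
      Subtype.ext (by rw [ht, hS])
    rw [suffixLev_cons₂, suffixLev_cons₂, e, e1, impl_cons_val]
    exact ⟨_, rfl⟩

theorem lev_eq_val (xs : List α) (ys : List β) :
    levenshtein C xs ys =
      (suffixLevenshtein C xs ys).1[0]'(suffixLevenshtein C xs ys).2 := rfl

end Levenshtein

open Levenshtein in
@[simp] theorem levenshtein_nil_nil {α β δ : Type*} [AddZeroClass δ] [Min δ]
    (C : Levenshtein.Cost α β δ) : levenshtein C ([] : List α) ([] : List β) = 0 := rfl

open Levenshtein in
@[simp] theorem levenshtein_cons_nil {α β δ : Type*} [AddZeroClass δ] [Min δ]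
    (C : Levenshtein.Cost α β δ) (x : α) (xs : List α) :
    levenshtein C (x :: xs) ([] : List β) = C.delete x + levenshtein C xs [] := by
  simp only [lev_eq_val, suffixLev_cons_nil_val C x xs, List.getElem_cons_zero]

open Levenshtein in
@[simp] theorem levenshtein_nil_cons {α β δ : Type*} [AddZeroClass δ] [Min δ]
    (C : Levenshtein.Cost α β δ) (y : β) (ys : List β) :
    levenshtein C ([] : List α) (y :: ys) = C.insert y + levenshtein C [] ys := by
  have hl := suffixLev_length C ([] : List α) ys
  obtain ⟨d, hS⟩ : ∃ d, (suffixLevenshtein C ([] : List α) ys).1 = [d] := by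
    cases hc : (suffixLevenshtein C ([] : List α) ys).1 with
    | nil => simp [hc] at hl
    | cons d ds =>
      cases ds with
      | nil => exact ⟨d, rfl⟩
      | cons _ _ => simp [hc] at hl
  have e1 : suffixLevenshtein C ([] : List α) ys = ⟨[d], by simp⟩ := Subtype.ext hS
  simp only [lev_eq_val, suffixLev_cons₂, e1, impl_nil_val, List.getElem_cons_zero]

open Levenshtein in
theorem levenshtein_cons_cons {α β δ : Type*} [AddZeroClass δ] [Min δ]
    (C : Levenshtein.Cost α β δ) (x : α) (xs : List α) (y : β) (ys : List β) :
    levenshtein C (x :: xs) (y :: ys) =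
      min (C.delete x + levenshtein C xs (y :: ys))
        (min (C.insert y + levenshtein C (x :: xs) ys) (C.substitute x y + levenshtein C xs ys)) := by
  obtain ⟨t, ht⟩ := suffixLev_cons₁ C x xs ys
  have hl := suffixLev_length C xs ys
  have h1 : levenshtein C (x :: xs) ys = t := by simp only [lev_eq_val, ht, List.getElem_cons_zero]
  have h3 : levenshtein C xs (y :: ys) =
      (impl C xs y (suffixLevenshtein C xs ys)).1[0]'(impl C xs y (suffixLevenshtein C xs ys)).2 := rfl
  have h2 : levenshtein C (x :: xs) (y :: ys) =
      (impl C (x :: xs) y (suffixLevenshtein C (x :: xs) ys)).1[0]'(impl C (x :: xs) y (suffixLevenshtein C (x :: xs) ys)).2 := rfl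
  rw [h2, h3, h1, lev_eq_val C xs ys]
  obtain ⟨d₂, ds, hS⟩ : ∃ d₂ ds, (suffixLevenshtein C xs ys).1 = d₂ :: ds := by
    cases hc : (suffixLevenshtein C xs ys).1 with
    | nil => simp [hc] at hl
    | cons d₂ ds => exact ⟨d₂, ds, rfl⟩
  have e1 : suffixLevenshtein C xs ys = ⟨d₂ :: ds, by simp⟩ := Subtype.ext hS
  have e : suffixLevenshtein C (x :: xs) ys = ⟨t :: d₂ :: ds, by simp⟩ :=
    Subtype.ext (by rw [ht, hS])
  simp only [e, e1, impl_cons_val, List.getElem_cons_zero]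

section LevHelpers


open Levenshtein

variable {A : Type*} [DecidableEq A]

private lemma lev_nil_left (ys : List A) :
    levenshtein defaultCost ([] : List A) ys = ys.length := by
  induction ys with
  | nil => simp
  | cons y ys ih => simp [ih]; omega

private lemma lev_nil_right (xs : List A) :
    levenshtein defaultCost xs ([] : List A) = xs.length := by
  induction xs with
  | nil => simp
  | cons x xs ih => simp [ih]; omega

private lemma lev_le_ins (xs : List A) (y : A) (ys : List A) :
    levenshtein defaultCost xs (y :: ys) ≤ 1 + levenshtein defaultCost xs ys := by
  cases xs with
  | nil => simp
  | cons x xs =>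
      rw [levenshtein_cons_cons]
      exact le_trans (min_le_right _ _) (le_trans (min_le_left _ _) (by simp))

private lemma lev_le_del (x : A) (xs ys : List A) :
    levenshtein defaultCost (x :: xs) ys ≤ 1 + levenshtein defaultCost xs ys := by
  cases ys with
  | nil => simp
  | cons y ys =>
      rw [levenshtein_cons_cons]
      exact le_trans (min_le_left _ _) (by simp)

private lemma lev_le_sub (x : A) (xs : List A) (y : A) (ys : List A) :
    levenshtein defaultCost (x :: xs) (y :: ys) ≤
      defaultCost.substitute x y + levenshtein defaultCost xs ys := by
  rw [levenshtein_cons_cons]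
  exact le_trans (min_le_right _ _) (min_le_right _ _)

private lemma lev_append_le (u1 u2 v w : List A) :
    levenshtein defaultCost (u1 ++ u2) (v ++ w) ≤
      levenshtein defaultCost u1 v + levenshtein defaultCost u2 w := by
  induction u1 generalizing v with
  | nil =>
      induction v with
      | nil => simp
      | cons y v' ihv =>
          simp only [List.nil_append] at *
          calc levenshtein defaultCost u2 (y :: (v' ++ w))
              ≤ 1 + levenshtein defaultCost u2 (v' ++ w) := lev_le_ins _ _ _
            _ ≤ 1 + (levenshtein defaultCost [] v' + levenshtein defaultCost u2 w) := by
                omega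
            _ = _ := by simp; omega
  | cons x u1' ihu =>
      induction v with
      | nil =>
          simp only [List.nil_append, List.cons_append]
          calc levenshtein defaultCost (x :: (u1' ++ u2)) w
              ≤ 1 + levenshtein defaultCost (u1' ++ u2) w := lev_le_del _ _ _
            _ ≤ 1 + (levenshtein defaultCost u1' [] + levenshtein defaultCost u2 w) := by
                have := ihu []; simp only [List.nil_append] at this; omega
            _ = _ := by simp; omega
      | cons y v' ihv =>
          have h1 : levenshtein defaultCost (x :: (u1' ++ u2)) (y :: (v' ++ w))
              ≤ 1 + (levenshtein defaultCost u1' (y :: v') + levenshtein defaultCost u2 w) := by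
            have := ihu (y :: v')
            simp only [List.cons_append] at this
            calc _ ≤ 1 + levenshtein defaultCost (u1' ++ u2) (y :: (v' ++ w)) := lev_le_del _ _ _
              _ ≤ _ := by omega
          have h2 : levenshtein defaultCost (x :: (u1' ++ u2)) (y :: (v' ++ w))
              ≤ 1 + (levenshtein defaultCost (x :: u1') v' + levenshtein defaultCost u2 w) := by
            calc _ ≤ 1 + levenshtein defaultCost (x :: (u1' ++ u2)) (v' ++ w) := lev_le_ins _ _ _
              _ ≤ _ := by simp only [List.cons_append] at ihv ⊢; omega
          have h3 : levenshtein defaultCost (x :: (u1' ++ u2)) (y :: (v' ++ w))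
              ≤ defaultCost.substitute x y +
                (levenshtein defaultCost u1' v' + levenshtein defaultCost u2 w) := by
            have := ihu v'
            calc _ ≤ defaultCost.substitute x y + levenshtein defaultCost (u1' ++ u2) (v' ++ w) :=
                lev_le_sub _ _ _ _
              _ ≤ _ := by omega
          simp only [List.cons_append]
          rw [levenshtein_cons_cons (C := defaultCost) x u1' y v']
          simp only [defaultCost] at h1 h2 h3 ⊢
          omega

private lemma lev_exists_split (u v w : List A) :
    ∃ i ≤ u.length,
      levenshtein defaultCost (u.take i) v + levenshtein defaultCost (u.drop i) w
        ≤ levenshtein defaultCost u (v ++ w) := by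
  induction u generalizing v with
  | nil =>
      refine ⟨0, le_refl _, ?_⟩
      simp [lev_nil_left]
  | cons x u' ihu =>
      induction v with
      | nil =>
          refine ⟨0, Nat.zero_le _, ?_⟩
          simp
      | cons y v' ihv =>
          obtain ⟨i₁, hi₁, H₁⟩ := ihu (y :: v')
          obtain ⟨i₂, hi₂, H₂⟩ := ihv
          obtain ⟨i₃, hi₃, H₃⟩ := ihu v'
          simp only [List.cons_append]
          rw [levenshtein_cons_cons]
          simp only [defaultCost_delete, defaultCost_insert]
          have c1 : levenshtein defaultCost ((x :: u').take (i₁ + 1)) (y :: v') +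
              levenshtein defaultCost ((x :: u').drop (i₁ + 1)) w
              ≤ 1 + levenshtein defaultCost u' ((y :: v') ++ w) := by
            simp only [List.take_succ_cons, List.drop_succ_cons]
            have := lev_le_del x (u'.take i₁) (y :: v')
            omega
          have c2 : levenshtein defaultCost ((x :: u').take i₂) (y :: v') +
              levenshtein defaultCost ((x :: u').drop i₂) w
              ≤ 1 + levenshtein defaultCost (x :: u') (v' ++ w) := by
            have := lev_le_ins ((x :: u').take i₂) y v'
            omega
          have c3 : levenshtein defaultCost ((x :: u').take (i₃ + 1)) (y :: v') +
              levenshtein defaultCost ((x :: u').drop (i₃ + 1)) w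
              ≤ defaultCost.substitute x y + levenshtein defaultCost u' (v' ++ w) := by
            simp only [List.take_succ_cons, List.drop_succ_cons]
            have := lev_le_sub x (u'.take i₃) y v'
            omega
          rcases min_cases (1 + levenshtein defaultCost u' (y :: v' ++ w))
              (min (1 + levenshtein defaultCost (x :: u') (v' ++ w))
                (defaultCost.substitute x y + levenshtein defaultCost u' (v' ++ w))) with
            ⟨he, _⟩ | ⟨he, _⟩
          · exact ⟨i₁ + 1, by simpa using hi₁, le_trans c1 (le_of_eq he.symm)⟩
          · rcases min_cases (1 + levenshtein defaultCost (x :: u') (v' ++ w))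
                (defaultCost.substitute x y + levenshtein defaultCost u' (v' ++ w)) with
              ⟨he2, _⟩ | ⟨he2, _⟩
            · exact ⟨i₂, le_trans hi₂ (by simp), le_trans c2 (le_of_eq (he.trans he2).symm)⟩
            · exact ⟨i₃ + 1, by simpa using hi₃, le_trans c3 (le_of_eq (he.trans he2).symm)⟩

private lemma lev_replicate (a : A) :
    ∀ n (u : List A) (l : ℕ), u.length + l ≤ n →
      levenshtein defaultCost u (List.replicate l a) =
        (u.length - l) + (l - u.count a) := by
  intro n
  induction n with
  | zero =>
      intro u l h
      have hu : u = [] := by cases u <;> simp_all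
      have hl : l = 0 := by omega
      subst hu hl; simp
  | succ n ih =>
      intro u l h
      match u, l with
      | [], l => simp [lev_nil_left]
      | x :: u', 0 => simp [lev_nil_right]; omega
      | x :: u', l + 1 =>
          rw [List.replicate_succ, levenshtein_cons_cons]
          have e1 := ih u' (l + 1) (by simp at h ⊢; omega)
          have e2 := ih (x :: u') l (by simp at h ⊢; omega)
          have e3 := ih u' l (by simp at h ⊢; omega)
          rw [List.replicate_succ] at e1
          rw [e1, e2, e3]
          have hc : u'.count a ≤ u'.length := List.count_le_length
          simp only [defaultCost_delete, defaultCost_insert, defaultCost_substitute,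
            List.count_cons, List.length_cons]
          by_cases hxa : x = a <;> simp [hxa] <;> omega

private lemma count_take_step (u : List A) (a : A) (i : ℕ) (h : i < u.length) :
    (u.take i).count a ≤ (u.take (i + 1)).count a ∧
      (u.take (i + 1)).count a ≤ (u.take i).count a + 1 := by
  rw [List.take_succ, List.count_append]
  have : (u[i]?.toList).count a ≤ 1 := by
    rw [List.getElem?_eq_getElem h]
    simp [List.count_cons]
    split <;> omega
  omega

private lemma count_drop_step (u : List A) (a : A) (i : ℕ) (h : i < u.length) :
    (u.drop (i + 1)).count a ≤ (u.drop i).count a ∧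
      (u.drop i).count a ≤ (u.drop (i + 1)).count a + 1 := by
  rw [List.drop_eq_getElem_cons h, List.count_cons]
  split <;> omega

end LevHelpers




/-- `ℓ(u, α^l β^r) = f₁ + min f₂` where `f₁ = max (k−l−r) 0` and
`f₂ i = max (l − N_α(u_(i))) 0 + max (r − N_β(u^(k−i))) 0`, the minimum taken over
`max 0 (min l (k−r)) ≤ i ≤ min k (max l (k−r))`.  (Here `ℕ`-subtraction is truncated,
so `x - y = max (x - y) 0`.) -/
theorem lev_to_two_runs_f1_f2 {A : Type*} [DecidableEq A] (u : List A) (k l r : ℕ)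
    (hk : u.length = k) (a b : A) (hab : a ≠ b) :
    levenshtein Levenshtein.defaultCost u (List.replicate l a ++ List.replicate r b) =
      (k - l - r) +
      sInf {x : ℕ | ∃ i : ℕ, max 0 (min l (k - r)) ≤ i ∧ i ≤ min k (max l (k - r)) ∧
        x = (l - (u.take i).count a) + (r - (u.drop i).count b)} := by
  subst hk
  set g : ℕ → ℕ := fun i =>
    (i - l) + (l - (u.take i).count a) + ((u.length - i) - r) + (r - (u.drop i).count b)
    with hg
  set lo := min l (u.length - r) with hlo
  set hi := min u.length (max l (u.length - r)) with hhi
  have hlohi : lo ≤ hi := by omega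
  have hhik : hi ≤ u.length := by omega
  have hA : ∀ i, i ≤ u.length →
      levenshtein Levenshtein.defaultCost (u.take i) (List.replicate l a) +
        levenshtein Levenshtein.defaultCost (u.drop i) (List.replicate r b) = g i := by
    intro i hik
    rw [lev_replicate a ((u.take i).length + l) (u.take i) l le_rfl,
      lev_replicate b ((u.drop i).length + r) (u.drop i) r le_rfl,
      List.length_take, List.length_drop, Nat.min_eq_left hik]
    simp only [hg]
    omega
  have hub : ∀ i, i ≤ u.length →
      levenshtein Levenshtein.defaultCost u (List.replicate l a ++ List.replicate r b) ≤ g i := by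
    intro i hik
    have h := lev_append_le (u.take i) (u.drop i) (List.replicate l a) (List.replicate r b)
    rw [List.take_append_drop] at h
    exact h.trans (le_of_eq (hA i hik))
  have hlb : ∃ i ≤ u.length,
      g i ≤ levenshtein Levenshtein.defaultCost u (List.replicate l a ++ List.replicate r b) := by
    obtain ⟨i, hik, h⟩ := lev_exists_split u (List.replicate l a) (List.replicate r b)
    exact ⟨i, hik, (le_of_eq (hA i hik).symm).trans h⟩
  have step_lo : ∀ i, i + 1 ≤ lo → g (i + 1) ≤ g i := by
    intro i hil
    have hik : i < u.length := by omega
    have h1 := count_take_step u a i hik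
    have h2 := count_drop_step u b i hik
    simp only [hg]
    omega
  have step_hi : ∀ i, hi ≤ i → i < u.length → g i ≤ g (i + 1) := by
    intro i h1 h2
    have h3 := count_take_step u a i h2
    have h4 := count_drop_step u b i h2
    simp only [hg]
    omega
  have mono_lo : ∀ j i, i + j = lo → g lo ≤ g i := by
    intro j
    induction j with
    | zero => intro i hij; rw [show i = lo by omega]
    | succ j ihj =>
        intro i hij
        exact (ihj (i + 1) (by omega)).trans (step_lo i (by omega))
  have mono_hi : ∀ j i, i = hi + j → i ≤ u.length → g hi ≤ g i := by
    intro j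
    induction j with
    | zero => intro i hij _; rw [show i = hi by omega]
    | succ j ihj =>
        intro i hij hik
        have h1 : g (i - 1) ≤ g i := by
          have := step_hi (i - 1) (by omega) (by omega)
          rwa [Nat.sub_add_cancel (by omega : 1 ≤ i)] at this
        exact ((ihj (i - 1) (by omega) (by omega)).trans h1)
  have heq : ∀ i, lo ≤ i → i ≤ hi →
      g i = (u.length - l - r) +
        ((l - (u.take i).count a) + (r - (u.drop i).count b)) := by
    intro i h1 h2
    simp only [hg]
    omega
  have hTne : {x : ℕ | ∃ i : ℕ, max 0 lo ≤ i ∧ i ≤ hi ∧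
      x = (l - (u.take i).count a) + (r - (u.drop i).count b)}.Nonempty :=
    ⟨_, lo, by omega, hlohi, rfl⟩
  apply le_antisymm
  · obtain ⟨i, hi1, hi2, hieq⟩ := Nat.sInf_mem hTne
    calc levenshtein Levenshtein.defaultCost u (List.replicate l a ++ List.replicate r b)
        ≤ g i := hub i (by omega)
      _ = (u.length - l - r) +
          ((l - (u.take i).count a) + (r - (u.drop i).count b)) := heq i (by omega) hi2
      _ = _ := by rw [← hieq]
  · obtain ⟨i₀, hi₀, hA0⟩ := hlb
    have key : ∃ j, lo ≤ j ∧ j ≤ hi ∧ g j ≤ g i₀ := by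
      rcases lt_or_ge i₀ lo with h | h
      · exact ⟨lo, le_rfl, hlohi, mono_lo (lo - i₀) i₀ (by omega)⟩
      · rcases le_or_gt i₀ hi with h' | h'
        · exact ⟨i₀, h, h', le_rfl⟩
        · exact ⟨hi, hlohi, le_rfl, mono_hi (i₀ - hi) i₀ (by omega) hi₀⟩
    obtain ⟨j, hj1, hj2, hj3⟩ := key
    have hsle : sInf {x : ℕ | ∃ i : ℕ, max 0 lo ≤ i ∧ i ≤ hi ∧
        x = (l - (u.take i).count a) + (r - (u.drop i).count b)} ≤
        (l - (u.take j).count a) + (r - (u.drop j).count b) :=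
      Nat.sInf_le ⟨j, by omega, hj2, rfl⟩
    calc (u.length - l - r) + sInf _
        ≤ (u.length - l - r) + ((l - (u.take j).count a) + (r - (u.drop j).count b)) := by
          omega
      _ = g j := (heq j hj1 hj2).symm
      _ ≤ g i₀ := hj3
      _ ≤ _ := hA0
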